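/- arXiv:2009.13052 — 5 statements merged into one kernel-verified Lean document; each statement's English description precedes it below -/
import Mathlib

section
/- Assume that all capped orbits have pairwise distinct actions, i.e. a_i − a_j ∉ λ₀·ℤ whenever i ≠ j in Fin n. Then a finite family (ξ_j) of nonzero vectors of C is orthogonal if and only if the actions A(ξ_j) are pairwise distinct modulo λ₀·ℤ, i.e. A(ξ_j) − A(ξ_{j'}) ∉ λ₀·ℤ for all j ≠ j'. -/
/-!  Common setup: `Λ := LaurentSeries (ZMod 2)`, `C := Fin n → Λ`, the action
functional `A`, orthogonality, capped orbits, the pairing `⟨d x̄, ȳ⟩`,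
Floer-type differentials and singular decompositions. -/

noncomputable section

/-- The Novikov field `Λ = 𝔽₂((q))`, realized as formal Laurent series over `ZMod 2`. -/
abbrev Lam : Type := LaurentSeries (ZMod 2)

open Classical in
/-- The action `A : C → ℝ ∪ {+∞}`: `A 0 = ⊤` and for `ξ ≠ 0`,
`A ξ = min { a i + λ₀ • ord (ξ i) | ξ i ≠ 0 }`. -/
def actA (n : ℕ) (lam0 : ℝ) (a : Fin n → ℝ) (xi : Fin n → Lam) : WithTop ℝ :=
  Finset.univ.inf fun i : Fin n =>
    if xi i = 0 then (⊤ : WithTop ℝ)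
    else ((a i + lam0 * ((xi i).order : ℝ) : ℝ) : WithTop ℝ)

/-- A finite family `(ξ j)` of vectors of `C` is orthogonal if
`A (∑ λ_j • ξ_j) = min_j A (λ_j • ξ_j)` for all coefficients `λ_j ∈ Λ`. -/
def IsOrthogonalFamily (n : ℕ) (lam0 : ℝ) (a : Fin n → ℝ) {ι : Type} [Fintype ι]
    (xi : ι → (Fin n → Lam)) : Prop :=
  ∀ c : ι → Lam,
    actA n lam0 a (∑ j, c j • xi j) = Finset.univ.inf fun j => actA n lam0 a (c j • xi j)

/-- The capped orbit `q^k eᵢ`. -/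
def cappedOrbit (n : ℕ) (i : Fin n) (k : ℤ) : Fin n → Lam :=
  Pi.single i (HahnSeries.single k 1)

/-- `⟨d x̄, ȳ⟩ ∈ 𝔽₂` for `x̄ = q^k eᵢ` and `ȳ = q^l eⱼ`: the `(l - k)`-th Laurent
coefficient of the `j`-th component of `d eᵢ`. -/
def pairing (n : ℕ) (d : (Fin n → Lam) →ₗ[Lam] (Fin n → Lam)) (i j : Fin n) (k l : ℤ) :
    ZMod 2 :=
  ((d (Pi.single i 1)) j).coeff (l - k)

/-- The set of arrow lengths `A ȳ - A x̄` over pairs of capped orbits with `⟨d x̄, ȳ⟩ = 1`. -/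
def arrowLengths (n : ℕ) (lam0 : ℝ) (a : Fin n → ℝ)
    (d : (Fin n → Lam) →ₗ[Lam] (Fin n → Lam)) : Set ℝ :=
  {t : ℝ | ∃ (i j : Fin n) (k l : ℤ),
    pairing n d i j k l = 1 ∧ t = (a j + lam0 * l) - (a i + lam0 * k)}

/-- The set of values `A (d ξ) - A ξ` over `ξ ∈ C` with `d ξ ≠ 0`. -/
def actionGaps (n : ℕ) (lam0 : ℝ) (a : Fin n → ℝ)
    (d : (Fin n → Lam) →ₗ[Lam] (Fin n → Lam)) : Set ℝ :=
  {t : ℝ | ∃ xi : Fin n → Lam, d xi ≠ 0 ∧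
    actA n lam0 a (d xi) = actA n lam0 a xi + (t : WithTop ℝ)}

/-- A Floer-type differential on `C`: a `Λ`-linear map squaring to zero that strictly
increases the action. -/
def IsFloerDifferential (n : ℕ) (lam0 : ℝ) (a : Fin n → ℝ)
    (d : (Fin n → Lam) →ₗ[Lam] (Fin n → Lam)) : Prop :=
  d ∘ₗ d = 0 ∧
    ∀ xi : Fin n → Lam, xi ≠ 0 → d xi ≠ 0 → actA n lam0 a xi < actA n lam0 a (d xi)

/-- A singular decomposition of `(C, d)`: `p + 2r = n` and an orthogonal basis
`α₁,…,α_p, η₁,…,η_r, γ₁,…,γ_r` of `C` over `Λ` with `d αᵢ = 0` and `d ηⱼ = γⱼ`. -/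
def IsSingularDecomposition (n : ℕ) (lam0 : ℝ) (a : Fin n → ℝ)
    (d : (Fin n → Lam) →ₗ[Lam] (Fin n → Lam)) (p r : ℕ)
    (alpha : Fin p → (Fin n → Lam)) (eta gamma : Fin r → (Fin n → Lam)) : Prop :=
  p + 2 * r = n ∧
  IsOrthogonalFamily n lam0 a (Sum.elim alpha (Sum.elim eta gamma)) ∧
  LinearIndependent Lam (Sum.elim alpha (Sum.elim eta gamma)) ∧
  Submodule.span Lam (Set.range (Sum.elim alpha (Sum.elim eta gamma))) = ⊤ ∧
  (∀ i, d (alpha i) = 0) ∧ (∀ j, d (eta j) = gamma j)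

/-- The set of bars `A (γ j) - A (η j)` of a singular decomposition; its infimum is the
minimal bar `β_min` when `r ≥ 1`. -/
def barSet (n : ℕ) (lam0 : ℝ) (a : Fin n → ℝ) {r : ℕ}
    (eta gamma : Fin r → (Fin n → Lam)) : Set ℝ :=
  {t : ℝ | ∃ j : Fin r, actA n lam0 a (gamma j) = actA n lam0 a (eta j) + (t : WithTop ℝ)}

end

noncomputable section AuxOrth

open Classical in
def vA (lam0 : ℝ) (b : ℝ) (x : Lam) : WithTop ℝ :=
  if x = 0 then ⊤ else ((b + lam0 * (x.order : ℝ) : ℝ) : WithTop ℝ)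

lemma actA_eq (n : ℕ) (lam0 : ℝ) (a : Fin n → ℝ) (xi : Fin n → Lam) :
    actA n lam0 a xi = Finset.univ.inf fun i => vA lam0 (a i) (xi i) := by
  rw [actA]
  refine Finset.inf_congr rfl fun i _ => ?_
  rw [vA]

lemma vA_zero (lam0 b : ℝ) : vA lam0 b (0 : Lam) = ⊤ := by simp [vA]

lemma vA_of_ne (lam0 b : ℝ) {x : Lam} (hx : x ≠ 0) :
    vA lam0 b x = ((b + lam0 * (x.order : ℝ) : ℝ) : WithTop ℝ) := by simp [vA, hx]

lemma vA_ne_top_iff {lam0 b : ℝ} {x : Lam} : vA lam0 b x ≠ ⊤ ↔ x ≠ 0 := by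
  constructor
  · intro h hx; rw [hx, vA_zero] at h; exact h rfl
  · intro hx; rw [vA_of_ne _ _ hx]; exact WithTop.coe_ne_top

lemma actA_eq_top_iff {n : ℕ} {lam0 : ℝ} {a : Fin n → ℝ} {xi : Fin n → Lam} :
    actA n lam0 a xi = ⊤ ↔ xi = 0 := by
  rw [actA_eq, Finset.inf_eq_top_iff]
  constructor
  · intro h
    funext i
    have := h i (Finset.mem_univ i)
    by_contra hxi
    rw [vA_of_ne _ _ hxi] at this
    exact WithTop.coe_ne_top this
  · intro h i _
    rw [h]; exact vA_zero _ _

lemma actA_zero {n : ℕ} {lam0 : ℝ} {a : Fin n → ℝ} : actA n lam0 a 0 = ⊤ :=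
  actA_eq_top_iff.mpr rfl

lemma actA_ne_top {n : ℕ} {lam0 : ℝ} {a : Fin n → ℝ} {xi : Fin n → Lam} (h : xi ≠ 0) :
    actA n lam0 a xi ≠ ⊤ := fun ht => h (actA_eq_top_iff.mp ht)

lemma affine_mono {lam0 b : ℝ} (hl : 0 < lam0) {k k' : ℤ} (h : k ≤ k') :
    ((b + lam0 * (k : ℝ) : ℝ) : WithTop ℝ) ≤ ((b + lam0 * (k' : ℝ) : ℝ) : WithTop ℝ) := by
  rw [WithTop.coe_le_coe]
  have hk : (k : ℝ) ≤ (k' : ℝ) := by exact_mod_cast h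
  nlinarith

lemma affine_strict {lam0 b : ℝ} (hl : 0 < lam0) {k k' : ℤ} (h : k < k') :
    ((b + lam0 * (k : ℝ) : ℝ) : WithTop ℝ) < ((b + lam0 * (k' : ℝ) : ℝ) : WithTop ℝ) := by
  rw [WithTop.coe_lt_coe]
  have hk : (k : ℝ) < (k' : ℝ) := by exact_mod_cast h
  nlinarith

lemma min_vA_le_add {lam0 b : ℝ} (hl : 0 < lam0) (x y : Lam) :
    min (vA lam0 b x) (vA lam0 b y) ≤ vA lam0 b (x + y) := by
  by_cases hx : x = 0
  · rw [hx, zero_add]; exact min_le_right _ _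
  by_cases hy : y = 0
  · rw [hy, add_zero]; exact min_le_left _ _
  by_cases hxy : x + y = 0
  · rw [hxy, vA_zero]; exact le_top
  have hord := HahnSeries.min_order_le_order_add hxy
  rw [vA_of_ne _ _ hx, vA_of_ne _ _ hy, vA_of_ne _ _ hxy]
  rcases min_cases x.order y.order with ⟨h1, _⟩ | ⟨h1, _⟩ <;> rw [h1] at hord
  · exact min_le_of_left_le (affine_mono hl hord)
  · exact min_le_of_right_le (affine_mono hl hord)

lemma min_actA_le_add {n : ℕ} {lam0 : ℝ} {a : Fin n → ℝ} (hl : 0 < lam0)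
    (x y : Fin n → Lam) :
    min (actA n lam0 a x) (actA n lam0 a y) ≤ actA n lam0 a (x + y) := by
  rw [actA_eq n lam0 a x, actA_eq n lam0 a y, actA_eq n lam0 a (x + y)]
  refine Finset.le_inf fun i _ => ?_
  have h1 : Finset.univ.inf (fun i => vA lam0 (a i) (x i)) ≤ vA lam0 (a i) (x i) :=
    Finset.inf_le (Finset.mem_univ i)
  have h2 : Finset.univ.inf (fun i => vA lam0 (a i) (y i)) ≤ vA lam0 (a i) (y i) :=
    Finset.inf_le (Finset.mem_univ i)
  calc _ ≤ min (vA lam0 (a i) (x i)) (vA lam0 (a i) (y i)) := min_le_min h1 h2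
    _ ≤ vA lam0 (a i) ((x + y) i) := by rw [Pi.add_apply]; exact min_vA_le_add hl _ _

lemma exists_attainer {n : ℕ} {lam0 : ℝ} {a : Fin n → ℝ} {xi : Fin n → Lam} (hxi : xi ≠ 0) :
    ∃ i, xi i ≠ 0 ∧ actA n lam0 a xi = vA lam0 (a i) (xi i) := by
  have hne : (Finset.univ : Finset (Fin n)).Nonempty := by
    by_contra h
    rw [Finset.not_nonempty_iff_eq_empty, Finset.univ_eq_empty_iff] at h
    exact hxi (funext fun i => h.elim i)
  obtain ⟨i, _, hi⟩ := Finset.exists_mem_eq_inf Finset.univ hne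
    (fun i => vA lam0 (a i) (xi i))
  refine ⟨i, ?_, by rw [actA_eq]; exact hi⟩
  intro h0
  apply actA_ne_top hxi
  rw [actA_eq, hi, h0, vA_zero]

lemma actA_add_of_lt {n : ℕ} {lam0 : ℝ} {a : Fin n → ℝ} (hl : 0 < lam0) {x y : Fin n → Lam}
    (h : actA n lam0 a x < actA n lam0 a y) :
    actA n lam0 a (x + y) = actA n lam0 a x := by
  have hxne : x ≠ 0 := by
    intro h0; rw [h0, actA_zero] at h; exact not_top_lt h
  obtain ⟨i, hxi, hi⟩ := exists_attainer hxne
  apply le_antisymm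
  · have key : vA lam0 (a i) (x i + y i) = vA lam0 (a i) (x i) := by
      by_cases hyi : y i = 0
      · rw [hyi, add_zero]
      · have h1 : vA lam0 (a i) (x i) < vA lam0 (a i) (y i) := by
          calc vA lam0 (a i) (x i) = actA n lam0 a x := hi.symm
            _ < actA n lam0 a y := h
            _ ≤ vA lam0 (a i) (y i) := by
              rw [actA_eq]; exact Finset.inf_le (Finset.mem_univ i)
        have hord : (x i).order < (y i).order := by
          rw [vA_of_ne _ _ hxi, vA_of_ne _ _ hyi, WithTop.coe_lt_coe] at h1
          have h2 : lam0 * ((x i).order : ℝ) < lam0 * ((y i).order : ℝ) := by linarith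
          exact_mod_cast lt_of_mul_lt_mul_left h2 hl.le
        have hc : (x i + y i).coeff (x i).order ≠ 0 := by
          rw [HahnSeries.coeff_add, HahnSeries.coeff_eq_zero_of_lt_order hord, add_zero]
          exact mt HahnSeries.coeff_order_eq_zero.mp hxi
        have hxyne : x i + y i ≠ 0 := by
          intro h0; rw [h0] at hc; exact hc rfl
        have hole : (x i + y i).order ≤ (x i).order :=
          HahnSeries.order_le_of_coeff_ne_zero hc
        have hge : (x i).order ≤ (x i + y i).order := by
          have h3 := HahnSeries.min_order_le_order_add hxyne
          rwa [min_eq_left hord.le] at h3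
        rw [vA_of_ne _ _ hxyne, vA_of_ne _ _ hxi, le_antisymm hole hge]
    calc actA n lam0 a (x + y) ≤ vA lam0 (a i) ((x + y) i) := by
          rw [actA_eq]; exact Finset.inf_le (Finset.mem_univ i)
      _ = actA n lam0 a x := by rw [Pi.add_apply, key, ← hi]
  · calc actA n lam0 a x = min (actA n lam0 a x) (actA n lam0 a y) := (min_eq_left h.le).symm
      _ ≤ actA n lam0 a (x + y) := min_actA_le_add hl x y

lemma actA_add_of_ne {n : ℕ} {lam0 : ℝ} {a : Fin n → ℝ} (hl : 0 < lam0) {x y : Fin n → Lam}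
    (h : actA n lam0 a x ≠ actA n lam0 a y) :
    actA n lam0 a (x + y) = min (actA n lam0 a x) (actA n lam0 a y) := by
  rcases h.lt_or_gt with h' | h'
  · rw [actA_add_of_lt hl h', min_eq_left h'.le]
  · rw [add_comm, actA_add_of_lt hl h', min_eq_right h'.le]

lemma inf_add_const {ι : Type*} (s : Finset ι) (f : ι → WithTop ℝ) (r : ℝ) :
    s.inf (fun j => f j + (r : WithTop ℝ)) = s.inf f + (r : WithTop ℝ) := by
  induction s using Finset.cons_induction with
  | empty => simp
  | cons j s hjs ih =>
    rw [Finset.inf_cons, Finset.inf_cons, ih]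
    rcases le_total (f j) (s.inf f) with h | h
    · rw [inf_eq_left.mpr h, inf_eq_left.mpr (add_le_add_left h _)]
    · rw [inf_eq_right.mpr h, inf_eq_right.mpr (add_le_add_left h _)]

lemma actA_smul (n : ℕ) (lam0 : ℝ) (a : Fin n → ℝ) {c : Lam} (hc : c ≠ 0)
    (xi : Fin n → Lam) :
    actA n lam0 a (c • xi)
      = actA n lam0 a xi + ((lam0 * (c.order : ℝ) : ℝ) : WithTop ℝ) := by
  rw [actA_eq, actA_eq, ← inf_add_const]
  refine Finset.inf_congr rfl fun i _ => ?_
  by_cases hxi : xi i = 0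
  · have h0 : (c • xi) i = 0 := by simp [hxi]
    rw [h0, hxi, vA_zero, top_add]
  · have h1 : (c • xi) i = c * xi i := rfl
    have h2 : c * xi i ≠ 0 := mul_ne_zero hc hxi
    rw [h1, vA_of_ne _ _ h2, vA_of_ne _ _ hxi, HahnSeries.order_mul hc hxi,
      ← WithTop.coe_add, WithTop.coe_eq_coe]
    push_cast
    ring

lemma unique_rep {n : ℕ} {lam0 : ℝ} {a : Fin n → ℝ} (hl : 0 < lam0)
    (hdist : ∀ i j : Fin n, i ≠ j → ∀ k : ℤ, a i - a j ≠ lam0 * k)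
    {i i' : Fin n} {m m' : ℤ}
    (h : a i + lam0 * (m : ℝ) = a i' + lam0 * (m' : ℝ)) : i = i' ∧ m = m' := by
  have hii : i = i' := by
    by_contra hne
    exact hdist i i' hne (m' - m) (by push_cast; linarith)
  subst hii
  have h2 : lam0 * (m : ℝ) = lam0 * (m' : ℝ) := by linarith
  have h3 : (m : ℝ) = (m' : ℝ) := mul_left_cancel₀ hl.ne' h2
  exact ⟨rfl, by exact_mod_cast h3⟩

lemma actA_sum {n : ℕ} {lam0 : ℝ} {a : Fin n → ℝ} (hl : 0 < lam0)
    {ι : Type} (s : Finset ι) (η : ι → (Fin n → Lam))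
    (hd : ∀ j ∈ s, ∀ j' ∈ s, j ≠ j' →
      actA n lam0 a (η j) = actA n lam0 a (η j') → actA n lam0 a (η j) = ⊤) :
    actA n lam0 a (∑ j ∈ s, η j) = s.inf (fun j => actA n lam0 a (η j)) := by
  induction s using Finset.cons_induction with
  | empty => simp [actA_zero]
  | cons j s hjs ih =>
    have hd' : ∀ j₁ ∈ s, ∀ j₂ ∈ s, j₁ ≠ j₂ →
        actA n lam0 a (η j₁) = actA n lam0 a (η j₂) → actA n lam0 a (η j₁) = ⊤ :=
      fun j₁ h1 j₂ h2 => hd j₁ (Finset.mem_cons_of_mem h1) j₂ (Finset.mem_cons_of_mem h2)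
    rw [Finset.sum_cons, Finset.inf_cons, ← ih hd']
    by_cases h : actA n lam0 a (η j) = actA n lam0 a (∑ j ∈ s, η j)
    · have hs : actA n lam0 a (∑ j ∈ s, η j) = ⊤ := by
        by_contra hst
        have hsne : s.Nonempty := by
          rcases Finset.eq_empty_or_nonempty s with rfl | hne
          · simp [actA_zero] at hst
          · exact hne
        rw [ih hd'] at hst h
        obtain ⟨j', hj', hj'e⟩ := Finset.exists_mem_eq_inf s hsne
          (fun j => actA n lam0 a (η j))
        rw [hj'e] at h hst
        have hne' : j ≠ j' := fun hjj => hjs (hjj ▸ hj')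
        exact hst (h ▸ hd j (Finset.mem_cons_self j s) j' (Finset.mem_cons_of_mem hj') hne' h)
      have hj0 : η j = 0 := actA_eq_top_iff.mp (h.trans hs)
      simp [hj0, actA_zero, hs]
    · rw [actA_add_of_ne hl h]

lemma actA_lt_add {n : ℕ} {lam0 : ℝ} {a : Fin n → ℝ} (hl : 0 < lam0)
    (hdist : ∀ i j : Fin n, i ≠ j → ∀ k : ℤ, a i - a j ≠ lam0 * k)
    {x y : Fin n → Lam} (hx : x ≠ 0) (hy : y ≠ 0)
    (h : actA n lam0 a x = actA n lam0 a y) :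
    actA n lam0 a x < actA n lam0 a (x + y) := by
  obtain ⟨i, hxi, hi⟩ := exists_attainer hx
  obtain ⟨i', hyi', hi'⟩ := exists_attainer hy
  have heq : a i + lam0 * ((x i).order : ℝ) = a i' + lam0 * ((y i').order : ℝ) := by
    have h1 : vA lam0 (a i) (x i) = vA lam0 (a i') (y i') := by rw [← hi, ← hi', h]
    rw [vA_of_ne _ _ hxi, vA_of_ne _ _ hyi', WithTop.coe_eq_coe] at h1
    exact h1
  obtain ⟨hii, hmm⟩ := unique_rep hl hdist heq
  subst hii
  set m := (x i).order with hm
  have hyo : (y i).order = m := hmm.symm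
  -- key: actA x is a coe, and every coordinate of x + y has vA > actA x
  have hAx : actA n lam0 a x = ((a i + lam0 * (m : ℝ) : ℝ) : WithTop ℝ) := by
    rw [hi, vA_of_ne _ _ hxi]
  rw [hAx, actA_eq]
  refine (Finset.lt_inf_iff (WithTop.coe_lt_top _)).mpr fun b _ => ?_
  -- generic fact: for any coordinate b and z ∈ {x, y}, vA (a b) (z b) > coe unless equal data
  have hcoord : ∀ z : Fin n → Lam, actA n lam0 a z = ((a i + lam0 * (m : ℝ) : ℝ) : WithTop ℝ) →
      ∀ b : Fin n, b ≠ i → ((a i + lam0 * (m : ℝ) : ℝ) : WithTop ℝ) < vA lam0 (a b) (z b) := by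
    intro z hz b hbi
    by_cases hzb : z b = 0
    · rw [hzb, vA_zero]; exact WithTop.coe_lt_top _
    · have hge : ((a i + lam0 * (m : ℝ) : ℝ) : WithTop ℝ) ≤ vA lam0 (a b) (z b) := by
        rw [← hz, actA_eq]; exact Finset.inf_le (Finset.mem_univ b)
      rcases hge.lt_or_eq with hlt | heq2
      · exact hlt
      · exfalso
        rw [vA_of_ne _ _ hzb, WithTop.coe_eq_coe] at heq2
        exact hbi ((unique_rep hl hdist heq2.symm).1)
  have hAy : actA n lam0 a y = ((a i + lam0 * (m : ℝ) : ℝ) : WithTop ℝ) := h ▸ hAx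
  by_cases hb : b = i
  · subst hb
    -- leading coefficients cancel
    have hone : ∀ u : ZMod 2, u ≠ 0 → u = 1 := by decide
    have hcx : (x b).coeff m = 1 := hone _ (mt HahnSeries.coeff_order_eq_zero.mp hxi)
    have hcy : (y b).coeff m = 1 := by
      have := mt HahnSeries.coeff_order_eq_zero.mp hyi'
      rw [hyo] at this
      exact hone _ this
    have hc0 : (x b + y b).coeff m = 0 := by
      rw [HahnSeries.coeff_add, hcx, hcy]; decide
    by_cases hxyb : x b + y b = 0
    · rw [Pi.add_apply, hxyb, vA_zero]; exact WithTop.coe_lt_top _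
    · have hgeo : m ≤ (x b + y b).order := by
        have h3 := HahnSeries.min_order_le_order_add hxyb
        rwa [hyo, min_self] at h3
      have hneo : (x b + y b).order ≠ m := by
        intro he
        exact mt HahnSeries.coeff_order_eq_zero.mp hxyb (he ▸ hc0)
      have hgto : m < (x b + y b).order := lt_of_le_of_ne hgeo (Ne.symm hneo)
      rw [Pi.add_apply, vA_of_ne _ _ hxyb]
      exact affine_strict hl hgto
  · have h1 := hcoord x hAx b hb
    have h2 := hcoord y hAy b hb
    calc ((a i + lam0 * (m : ℝ) : ℝ) : WithTop ℝ)
        < min (vA lam0 (a b) (x b)) (vA lam0 (a b) (y b)) := lt_min h1 h2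
      _ ≤ vA lam0 (a b) ((x + y) b) := by rw [Pi.add_apply]; exact min_vA_le_add hl _ _

end AuxOrth

/-- If all capped orbits have pairwise distinct actions
(`a i - a j ∉ λ₀·ℤ` for `i ≠ j`), then a finite family of nonzero vectors of `C` is
orthogonal iff the actions `A (ξ j)` are pairwise distinct modulo `λ₀·ℤ`. -/
theorem orthogonal_iff_actions_distinct (n : ℕ) (lam0 : ℝ) (hlam0 : 0 < lam0) (a : Fin n → ℝ)
    (hdist : ∀ i j : Fin n, i ≠ j → ∀ k : ℤ, a i - a j ≠ lam0 * k)
    {ι : Type} [Fintype ι] (xi : ι → (Fin n → Lam)) (hne : ∀ j, xi j ≠ 0) :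
    IsOrthogonalFamily n lam0 a xi ↔
      ∀ j j' : ι, j ≠ j' → ∀ k : ℤ,
        actA n lam0 a (xi j) ≠ actA n lam0 a (xi j') + ((lam0 * k : ℝ) : WithTop ℝ) := by
  classical
  constructor
  · intro hOrth j j' hjj' k hk
    set y : Fin n → Lam := (HahnSeries.single k 1 : Lam) • xi j' with hy
    have hq : (HahnSeries.single k (1 : ZMod 2) : Lam) ≠ 0 :=
      HahnSeries.single_ne_zero one_ne_zero
    have hyne : y ≠ 0 := smul_ne_zero hq (hne j')
    have hAy : actA n lam0 a y
        = actA n lam0 a (xi j') + ((lam0 * (k : ℝ) : ℝ) : WithTop ℝ) := by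
      rw [hy, actA_smul n lam0 a hq, HahnSeries.order_single one_ne_zero]
    have hA : actA n lam0 a (xi j) = actA n lam0 a y := by rw [hAy]; exact hk
    have hlt := actA_lt_add hlam0 hdist (hne j) hyne hA
    set c : ι → Lam := fun t => if t = j then 1 else if t = j' then HahnSeries.single k 1 else 0
      with hc
    have hsum : ∑ t, c t • xi t = xi j + y := by
      have hterm : ∀ t, c t • xi t =
          (if t = j then xi j else 0) + (if t = j' then y else 0) := by
        intro t
        by_cases h1 : t = j
        · subst h1
          rw [if_pos rfl, if_neg hjj']
          simp [hc]
        · by_cases h2 : t = j'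
          · subst h2
            simp [hc, h1, hy]
          · have h4 : c t = 0 := by simp [hc, h1, h2]
            rw [h4, if_neg h1, if_neg h2, add_zero]
            funext i; show (0 : Lam) * xi t i = 0; exact zero_mul _
      rw [Finset.sum_congr rfl fun t _ => hterm t, Finset.sum_add_distrib,
        Finset.sum_ite_eq' Finset.univ j (fun _ => xi j),
        Finset.sum_ite_eq' Finset.univ j' (fun _ => y)]
      simp
    have hinf : (Finset.univ.inf fun t => actA n lam0 a (c t • xi t))
        = actA n lam0 a (xi j) := by
      apply le_antisymm
      · have h1 : c j • xi j = xi j := by simp [hc]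
        calc (Finset.univ.inf fun t => actA n lam0 a (c t • xi t))
            ≤ actA n lam0 a (c j • xi j) := Finset.inf_le (Finset.mem_univ j)
          _ = actA n lam0 a (xi j) := by rw [h1]
      · refine Finset.le_inf fun t _ => ?_
        by_cases h1 : t = j
        · subst h1; simp [hc]
        · by_cases h2 : t = j'
          · subst h2
            have h3 : c t • xi t = y := by simp [hc, h1, hy]
            rw [h3, ← hA]
          · have h4 : c t = 0 := by simp [hc, h1, h2]
            have h3 : c t • xi t = 0 := by
              rw [h4]; funext i; show (0 : Lam) * xi t i = 0; exact zero_mul _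
            rw [h3, actA_zero]
            exact le_top
    have hO := hOrth c
    rw [hsum, hinf] at hO
    rw [hO] at hlt
    exact lt_irrefl _ hlt
  · intro hd c
    refine actA_sum hlam0 Finset.univ (fun t => c t • xi t) ?_
    intro j _ j' _ hjj' heq0
    by_contra htop0
    have heq : actA n lam0 a (c j • xi j) = actA n lam0 a (c j' • xi j') := heq0
    have htop : actA n lam0 a (c j • xi j) ≠ ⊤ := htop0
    have hzs : ∀ t : ι, (0 : Lam) • xi t = 0 := fun t => by
      funext i; show (0 : Lam) * xi t i = 0; exact zero_mul _
    have hje : c j • xi j ≠ 0 := fun h0 => htop (by rw [h0]; exact actA_zero)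
    have hcj : c j ≠ 0 := fun h0 => hje (by rw [h0, hzs j])
    have hj'e : c j' • xi j' ≠ 0 := fun h0 => htop (heq.trans (by rw [h0]; exact actA_zero))
    have hcj' : c j' ≠ 0 := fun h0 => hj'e (by rw [h0, hzs j'])
    obtain ⟨u, hu⟩ := WithTop.ne_top_iff_exists.mp (actA_ne_top (hne j))
    obtain ⟨u', hu'⟩ := WithTop.ne_top_iff_exists.mp (actA_ne_top (hne j'))
    rw [actA_smul n lam0 a hcj, actA_smul n lam0 a hcj', ← hu, ← hu',
      ← WithTop.coe_add, ← WithTop.coe_add, WithTop.coe_eq_coe] at heq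
    apply hd j j' hjj' ((c j').order - (c j).order)
    rw [← hu, ← hu', ← WithTop.coe_add, WithTop.coe_eq_coe]
    push_cast
    linarith
end

section
/- Let d : C → C be a nonzero Λ-linear map. Then the infimum of A(ȳ) − A(x̄) over all pairs of capped orbits x̄, ȳ with ⟨d x̄, ȳ⟩ = 1 equals the infimum of A(d ξ) − A(ξ) over all ξ ∈ C with d ξ ≠ 0 (both sets of real numbers are nonempty and bounded below, and the infima are taken in ℝ). -/
noncomputable section AuxSIAL

lemma auxSIAL_dApply (n : ℕ) (d : (Fin n → Lam) →ₗ[Lam] (Fin n → Lam)) (xi : Fin n → Lam)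
    (j : Fin n) : d xi j = ∑ i, xi i * (d (Pi.single i 1)) j := by
  have h : xi = ∑ i, xi i • (Pi.single i 1 : Fin n → Lam) := by
    have h1 : ∀ i : Fin n, xi i • (Pi.single i 1 : Fin n → Lam) = Pi.single i (xi i) := by
      intro i; funext j'
      simp [Pi.single_apply, mul_ite]
    simp_rw [h1]
    exact (Finset.univ_sum_single xi).symm
  conv_lhs => rw [h]
  rw [map_sum]
  simp [Finset.sum_apply]

lemma auxSIAL_zmodtwo {x : ZMod 2} (h : x ≠ 0) : x = 1 := by revert x; decide

lemma auxSIAL_actA_le (n : ℕ) (lam0 : ℝ) (a : Fin n → ℝ) (xi : Fin n → Lam) (i : Fin n)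
    (h : xi i ≠ 0) :
    actA n lam0 a xi ≤ ((a i + lam0 * ((xi i).order : ℝ) : ℝ) : WithTop ℝ) := by
  unfold actA
  refine le_trans (Finset.inf_le (Finset.mem_univ i)) ?_
  simp [h]

lemma auxSIAL_le_actA (n : ℕ) (lam0 : ℝ) (a : Fin n → ℝ) (xi : Fin n → Lam) (c : WithTop ℝ)
    (h : ∀ i, xi i ≠ 0 → c ≤ ((a i + lam0 * ((xi i).order : ℝ) : ℝ) : WithTop ℝ)) :
    c ≤ actA n lam0 a xi := by
  unfold actA
  refine Finset.le_inf fun i _ => ?_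
  by_cases hi : xi i = 0
  · simp [hi]
  · simpa [hi] using h i hi

end AuxSIAL

/-- For a nonzero `Λ`-linear map `d : C → C`, the infimum of
`A ȳ - A x̄` over pairs of capped orbits with `⟨d x̄, ȳ⟩ = 1` equals the infimum of
`A (d ξ) - A ξ` over `ξ` with `d ξ ≠ 0`; both sets are nonempty and bounded below. -/
theorem sInf_arrowLengths_eq_sInf_actionGaps (n : ℕ) (lam0 : ℝ) (hlam0 : 0 < lam0)
    (a : Fin n → ℝ) (d : (Fin n → Lam) →ₗ[Lam] (Fin n → Lam)) (hd : d ≠ 0) :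
    (arrowLengths n lam0 a d).Nonempty ∧ BddBelow (arrowLengths n lam0 a d) ∧
    (actionGaps n lam0 a d).Nonempty ∧ BddBelow (actionGaps n lam0 a d) ∧
    sInf (arrowLengths n lam0 a d) = sInf (actionGaps n lam0 a d) := by
  classical
  set D : Fin n → Fin n → Lam := fun i j => (d (Pi.single i 1)) j with hDdef
  have hex : ∃ p : Fin n × Fin n, D p.1 p.2 ≠ 0 := by
    by_contra h
    push_neg at h
    apply hd
    refine LinearMap.ext fun xi => funext fun j => ?_
    rw [auxSIAL_dApply]
    simp only [LinearMap.zero_apply, Pi.zero_apply]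
    refine Finset.sum_eq_zero fun i _ => ?_
    rw [show (d (Pi.single i 1)) j = D i j from rfl, h (i, j), mul_zero]
  set g : Fin n × Fin n → ℝ :=
    fun p => a p.2 - a p.1 + lam0 * (((D p.1 p.2).order : ℤ) : ℝ) with hgdef
  set P : Finset (Fin n × Fin n) := Finset.univ.filter (fun p => D p.1 p.2 ≠ 0) with hPdef
  have hPne : P.Nonempty := by
    obtain ⟨p, hp⟩ := hex
    exact ⟨p, Finset.mem_filter.mpr ⟨Finset.mem_univ p, hp⟩⟩
  set M : ℝ := P.inf' hPne g with hMdef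
  obtain ⟨p₀, hp₀P, hp₀⟩ := Finset.exists_mem_eq_inf' hPne g
  have hDp₀ : D p₀.1 p₀.2 ≠ 0 := (Finset.mem_filter.mp hp₀P).2
  have hMle : ∀ p : Fin n × Fin n, D p.1 p.2 ≠ 0 →
      M ≤ a p.2 - a p.1 + lam0 * (((D p.1 p.2).order : ℤ) : ℝ) := by
    intro p hp
    exact Finset.inf'_le g (Finset.mem_filter.mpr ⟨Finset.mem_univ p, hp⟩)
  have hgp0 : M = a p₀.2 - a p₀.1 + lam0 * (((D p₀.1 p₀.2).order : ℤ) : ℝ) :=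
    hMdef.trans hp₀
  -- M ∈ arrowLengths
  have hMarrow : M ∈ arrowLengths n lam0 a d := by
    refine ⟨p₀.1, p₀.2, 0, (D p₀.1 p₀.2).order, ?_, ?_⟩
    · apply auxSIAL_zmodtwo
      have := HahnSeries.coeff_order_eq_zero.not.mpr hDp₀
      simp only [pairing, sub_zero]; exact this
    · rw [hgp0]; push_cast; ring
  -- M is a lower bound for arrowLengths
  have hlbarrow : ∀ t ∈ arrowLengths n lam0 a d, M ≤ t := by
    rintro t ⟨i, j, k, l, hpair, rfl⟩
    have hco : (D i j).coeff (l - k) ≠ 0 := by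
      rw [show (D i j).coeff (l-k) = pairing n d i j k l from rfl, hpair]
      exact one_ne_zero
    have hDne : D i j ≠ 0 := fun h => hco (by simp [h])
    have hord : (D i j).order ≤ l - k := HahnSeries.order_le_of_coeff_ne_zero hco
    have h2 : (((D i j).order : ℤ) : ℝ) ≤ (l : ℝ) - (k : ℝ) := by exact_mod_cast hord
    have h3 : lam0 * (((D i j).order : ℤ) : ℝ) ≤ lam0 * ((l:ℝ) - (k:ℝ)) :=
      mul_le_mul_of_nonneg_left h2 hlam0.le
    have := hMle (i, j) hDne
    simp only at this
    linarith
  -- ξ₀ := e_{p₀.1}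
  set xi0 : Fin n → Lam := Pi.single p₀.1 1 with hxi0
  have hxi0val : xi0 p₀.1 = 1 := by simp [hxi0]
  have hxi0other : ∀ i, i ≠ p₀.1 → xi0 i = 0 := by
    intro i hi; simp [hxi0, Pi.single_apply, hi]
  have hdxi0 : ∀ j, d xi0 j = D p₀.1 j := by
    intro j
    rw [auxSIAL_dApply]
    simp [hxi0, Pi.single_apply]
    rfl
  have hdxi0ne : d xi0 ≠ 0 := by
    intro h
    apply hDp₀
    rw [← hdxi0 p₀.2, h, Pi.zero_apply]
  have hxi0A : actA n lam0 a xi0 = ((a p₀.1 : ℝ) : WithTop ℝ) := by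
    apply le_antisymm
    · have h1 : xi0 p₀.1 ≠ 0 := by rw [hxi0val]; exact one_ne_zero
      have h := auxSIAL_actA_le n lam0 a xi0 p₀.1 h1
      rw [hxi0val, HahnSeries.order_one] at h
      simpa using h
    · apply auxSIAL_le_actA
      intro i hi
      have hieq : i = p₀.1 := by
        by_contra hne
        exact hi (hxi0other i hne)
      subst hieq
      rw [hxi0val, HahnSeries.order_one]
      simp
  have hdxi0A : actA n lam0 a (d xi0) = ((a p₀.1 + M : ℝ) : WithTop ℝ) := by
    apply le_antisymm
    · have h1 : d xi0 p₀.2 ≠ 0 := by rw [hdxi0]; exact hDp₀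
      have h := auxSIAL_actA_le n lam0 a (d xi0) p₀.2 h1
      rw [hdxi0 p₀.2] at h
      refine h.trans ?_
      rw [WithTop.coe_le_coe]
      rw [hgp0]
      apply le_of_eq
      ring
    · apply auxSIAL_le_actA
      intro j hj
      rw [hdxi0 j] at hj ⊢
      have := hMle (p₀.1, j) hj
      rw [WithTop.coe_le_coe]
      simp only at this
      linarith
  have hMgap : M ∈ actionGaps n lam0 a d := by
    refine ⟨xi0, hdxi0ne, ?_⟩
    rw [hxi0A, hdxi0A, ← WithTop.coe_add]
  -- M is a lower bound for actionGaps
  have hlbgap : ∀ t ∈ actionGaps n lam0 a d, M ≤ t := by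
    rintro t ⟨xi, hdxi, heq⟩
    have hxine : xi ≠ 0 := by
      intro h; apply hdxi; rw [h, map_zero]
    obtain ⟨i1, hi1⟩ : ∃ i, xi i ≠ 0 := by
      by_contra h; push_neg at h; exact hxine (funext fun i => h i)
    have hAne : actA n lam0 a xi ≠ ⊤ := by
      intro h
      have := auxSIAL_actA_le n lam0 a xi i1 hi1
      rw [h] at this
      exact (WithTop.coe_lt_top _).not_ge this
    obtain ⟨u, hu⟩ := WithTop.ne_top_iff_exists.mp hAne
    have hkey : ((u + M : ℝ) : WithTop ℝ) ≤ actA n lam0 a (d xi) := by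
      apply auxSIAL_le_actA
      intro j hj
      set m : ℤ := ((d xi) j).order with hm
      have hcm : ((d xi) j).coeff m ≠ 0 := HahnSeries.coeff_order_eq_zero.not.mpr hj
      have hsum : ((d xi) j).coeff m = ∑ i, (xi i * D i j).coeff m := by
        rw [auxSIAL_dApply]
        exact map_sum (HahnSeries.coeff.addMonoidHom m) _ _
      rw [hsum] at hcm
      obtain ⟨i, -, hci⟩ := Finset.exists_ne_zero_of_sum_ne_zero hcm
      have hprodne : xi i * D i j ≠ 0 := fun h => hci (by simp [h])
      have hxii : xi i ≠ 0 := fun h => hprodne (by rw [h, zero_mul])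
      have hDij : D i j ≠ 0 := fun h => hprodne (by rw [h, mul_zero])
      have hordle : (xi i).order + (D i j).order ≤ m := by
        rw [← HahnSeries.order_mul hxii hDij]
        exact HahnSeries.order_le_of_coeff_ne_zero hci
      have hui : u ≤ a i + lam0 * (((xi i).order : ℤ) : ℝ) := by
        have h := auxSIAL_actA_le n lam0 a xi i hxii
        rw [← hu] at h
        exact_mod_cast h
      have hMg := hMle (i, j) hDij
      simp only at hMg
      have hcast : ((((xi i).order : ℤ) : ℝ) + (((D i j).order : ℤ) : ℝ)) ≤ ((m : ℤ) : ℝ) := by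
        exact_mod_cast hordle
      have hmul : lam0 * ((((xi i).order : ℤ) : ℝ) + (((D i j).order : ℤ) : ℝ))
          ≤ lam0 * ((m : ℤ) : ℝ) := mul_le_mul_of_nonneg_left hcast hlam0.le
      have hdistrib : lam0 * ((((xi i).order : ℤ) : ℝ) + (((D i j).order : ℤ) : ℝ))
          = lam0 * (((xi i).order : ℤ) : ℝ) + lam0 * (((D i j).order : ℤ) : ℝ) := by ring
      rw [WithTop.coe_le_coe]
      linarith
    rw [heq, ← hu, ← WithTop.coe_add] at hkey
    have := WithTop.coe_le_coe.mp hkey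
    linarith
  refine ⟨⟨M, hMarrow⟩, ⟨M, hlbarrow⟩, ⟨M, hMgap⟩, ⟨M, hlbgap⟩, ?_⟩
  have h1 : sInf (arrowLengths n lam0 a d) = M :=
    le_antisymm (csInf_le ⟨M, hlbarrow⟩ hMarrow) (le_csInf ⟨M, hMarrow⟩ hlbarrow)
  have h2 : sInf (actionGaps n lam0 a d) = M :=
    le_antisymm (csInf_le ⟨M, hlbgap⟩ hMgap) (le_csInf ⟨M, hMgap⟩ hlbgap)
  rw [h1, h2]
end

section
/- Let R be a commutative ring and N a module over the polynomial ring R[X]. Suppose N is the internal direct sum of a family (N_i)_{i ∈ ℤ} of R-submodules such that X • N_i ⊆ N_{i+1} for every i ∈ ℤ. Then multiplication by the scalar 1 + X is injective on N. -/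
set_option synthInstance.maxHeartbeats 1000000

open Polynomial

/-- Let `N` be a module over `R[X]` which is the internal direct sum of
a family `(N i)_{i ∈ ℤ}` of `R`-submodules with `X • N i ⊆ N (i + 1)`. Then
multiplication by the scalar `1 + X` is injective on `N`. -/
theorem one_add_X_smul_injective (R : Type*) [CommRing R] (N : Type*) [AddCommGroup N]
    [Module (Polynomial R) N] [Module R N] [IsScalarTower R (Polynomial R) N]
    (Ni : ℤ → Submodule R N)
    (hinternal : DirectSum.IsInternal Ni)
    (hshift : ∀ (i : ℤ), ∀ x ∈ Ni i, (Polynomial.X : Polynomial R) • x ∈ Ni (i + 1)) :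
    Function.Injective (fun v : N => (1 + Polynomial.X : Polynomial R) • v) := by
  classical
  suffices h : ∀ v : N, (1 + Polynomial.X : Polynomial R) • v = 0 → v = 0 by
    intro a b hab
    simp only at hab
    have h0 : (1 + Polynomial.X : Polynomial R) • (a - b) = 0 := by
      rw [smul_sub, hab, sub_self]
    exact sub_eq_zero.mp (h _ h0)
  intro v hv
  set e := LinearEquiv.ofBijective (DirectSum.coeLinearMap Ni) hinternal with he
  set d := e.symm v with hd
  set c : ℤ → N := fun j => (d j : N) with hc
  have hcmem : ∀ j, c j ∈ Ni j := fun j => (d j).2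
  have hvd : v = e d := (e.apply_symm_apply v).symm
  have hvneg : v = -((Polynomial.X : Polynomial R) • v) := by
    have h1 : v + (Polynomial.X : Polynomial R) • v = 0 := by
      rw [← one_smul (Polynomial R) v (α := N), ← smul_assoc] at hv
      simpa [add_smul] using hv
    exact eq_neg_of_add_eq_zero_left h1
  set s := d.support with hs
  have hsum : v = ∑ i ∈ s, c i := by
    conv_lhs => rw [hvd, ← DirectSum.sum_support_of d]
    rw [map_sum]
    refine Finset.sum_congr rfl fun i _ => ?_
    show DirectSum.coeLinearMap Ni (DirectSum.of _ i (d i)) = c i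
    rw [DirectSum.coeLinearMap_of]
  have hnots : ∀ j, j ∉ s → c j = 0 := by
    intro j hj
    have : d j = 0 := DFinsupp.notMem_support_iff.mp hj
    simp [hc, this]
  have hkey : ∀ j : ℤ, c j = -((Polynomial.X : Polynomial R) • c (j - 1)) := by
    intro j
    have h2 : c j = -(((e.symm ((Polynomial.X : Polynomial R) • v)) j : N)) := by
      have : d = e.symm (-((Polynomial.X : Polynomial R) • v)) := by rw [← hvneg, hd]
      rw [hc]
      simp only [this, map_neg]
      rfl
    have h3 : (Polynomial.X : Polynomial R) • v = ∑ i ∈ s, (Polynomial.X : Polynomial R) • c i := by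
      rw [hsum, Finset.smul_sum]
    have h4 : ((e.symm ((Polynomial.X : Polynomial R) • v)) j : N)
        = ∑ i ∈ s, ((e.symm ((Polynomial.X : Polynomial R) • c i)) j : N) := by
      rw [h3, map_sum, DFinsupp.finset_sum_apply, AddSubmonoidClass.coe_finset_sum]
    have hterm : ∀ i : ℤ, ((e.symm ((Polynomial.X : Polynomial R) • c i)) j : N)
        = if i = j - 1 then (Polynomial.X : Polynomial R) • c i else 0 := by
      intro i
      have hmem := hshift i (c i) (hcmem i)
      by_cases hij : i = j - 1
      · subst hij
        have hj1 : j - 1 + 1 = j := by ring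
        rw [hj1] at hmem
        rw [if_pos rfl, hinternal.ofBijective_coeLinearMap_of_mem hmem]
      · have hne : i + 1 ≠ j := fun h => hij (by omega)
        rw [if_neg hij, hinternal.ofBijective_coeLinearMap_of_mem_ne hne hmem]
        rfl
    have h5 : ((e.symm ((Polynomial.X : Polynomial R) • v)) j : N)
        = (Polynomial.X : Polynomial R) • c (j - 1) := by
      rw [h4]
      rw [Finset.sum_congr rfl fun i _ => hterm i, Finset.sum_ite_eq' s (j - 1)
        (fun i => (Polynomial.X : Polynomial R) • c i)]
      by_cases hmem : j - 1 ∈ s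
      · rw [if_pos hmem]
      · rw [if_neg hmem, hnots _ hmem, smul_zero]
    rw [h2, h5]
  -- now show all components vanish
  have hcall : ∀ j, c j = 0 := by
    rcases Finset.eq_empty_or_nonempty s with hse | hne
    · intro j; exact hnots j (by simp [hse])
    · set b := s.min' hne with hb
      have hlow : ∀ j, j < b → c j = 0 := by
        intro j hj
        refine hnots j fun hjs => ?_
        exact absurd (s.min'_le j hjs) (by omega)
      have hge : ∀ j, b ≤ j → c j = 0 := by
        intro j hj
        refine Int.le_induction (motive := fun n _ => c n = 0)
          (by show c b = 0; rw [hkey b, hlow (b - 1) (by omega), smul_zero, neg_zero])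
          (fun n hn ih => by show c (n+1) = 0; rw [hkey (n + 1), add_sub_cancel_right, ih, smul_zero, neg_zero])
          j hj
      intro j
      rcases lt_or_ge j b with h | h
      · exact hlow j h
      · exact hge j h
  have hd0 : d = 0 := by
    refine DFinsupp.ext fun j => ?_
    rw [DFinsupp.zero_apply]
    exact Subtype.ext (hcall j)
  rw [hvd, hd0, map_zero]
end

section
/- Take R = ZMod 2 and let M be a vector space over ZMod 2. Let D be a (ZMod 2)[X]-linear endomorphism of M[X] with D ∘ D = 0, and let d̃ := ev₁ ∘ D ∘ ι : M → M. Suppose that multiplication by the scalar 1 + X is injective on the homology H(D) := ker D / im D (a (ZMod 2)[X]-module). Then there is a ZMod 2-linear isomorphism (ker d̃ / im d̃) ≅ H(D) / (1 + X)·H(D). -/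
open Polynomial PolynomialModule

/-- The homology `ker f ⧸ im f` of a linear endomorphism `f` (with `f ∘ f = 0` in the
intended applications). -/
noncomputable def LinHomology {R : Type*} [CommRing R] {N : Type*} [AddCommGroup N]
    [Module R N] (f : N →ₗ[R] N) : Type _ :=
  ↥(LinearMap.ker f) ⧸ (LinearMap.range f).comap (LinearMap.ker f).subtype

noncomputable instance {R : Type*} [CommRing R] {N : Type*} [AddCommGroup N]
    [Module R N] (f : N →ₗ[R] N) : AddCommGroup (LinHomology f) :=
  inferInstanceAs (AddCommGroup (↥(LinearMap.ker f) ⧸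
    (LinearMap.range f).comap (LinearMap.ker f).subtype))

noncomputable instance {R : Type*} [CommRing R] {N : Type*} [AddCommGroup N] [Module R N]
    {S : Type*} [Semiring S] [SMul S R] [Module S N] [IsScalarTower S R N]
    (f : N →ₗ[R] N) : Module S (LinHomology f) :=
  inferInstanceAs (Module S (↥(LinearMap.ker f) ⧸
    (LinearMap.range f).comap (LinearMap.ker f).subtype))

noncomputable instance {R : Type*} [CommRing R] {N : Type*} [AddCommGroup N] [Module R N]
    {S : Type*} [Semiring S] [SMul S R] [Module S N] [IsScalarTower S R N]
    (f : N →ₗ[R] N) : IsScalarTower S R (LinHomology f) :=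
  inferInstanceAs (IsScalarTower S R (↥(LinearMap.ker f) ⧸
    (LinearMap.range f).comap (LinearMap.ker f).subtype))

noncomputable instance {R : Type*} [CommRing R] {N : Type*} [AddCommGroup N]
    [Module R N] (f : N →ₗ[R] N) : Module R (LinHomology f) :=
  inferInstanceAs (Module R (↥(LinearMap.ker f) ⧸
    (LinearMap.range f).comap (LinearMap.ker f).subtype))

/-- The induced map `d̃ := ev₁ ∘ D ∘ ι : M → M` of a `(ZMod 2)[X]`-linear endomorphism of
`M[X]`, as a `ZMod 2`-linear map. -/
noncomputable def dTilde (M : Type*) [AddCommGroup M] [Module (ZMod 2) M]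
    (D : PolynomialModule (ZMod 2) M →ₗ[Polynomial (ZMod 2)] PolynomialModule (ZMod 2) M) :
    M →ₗ[ZMod 2] M :=
  (PolynomialModule.eval (1 : ZMod 2)) ∘ₗ (D.restrictScalars (ZMod 2)) ∘ₗ
    (PolynomialModule.lsingle (ZMod 2) 0)

/-- The quotient `H(D) ⧸ (1 + X)·H(D)` of the homology `H(D) = ker D ⧸ im D` by the image
of multiplication by the scalar `1 + X`. -/
noncomputable def HModOneAddX (M : Type*) [AddCommGroup M] [Module (ZMod 2) M]
    (D : PolynomialModule (ZMod 2) M →ₗ[Polynomial (ZMod 2)] PolynomialModule (ZMod 2) M) :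
    Type _ :=
  LinHomology D ⧸ LinearMap.range
    ((1 + Polynomial.X : Polynomial (ZMod 2)) •
      (LinearMap.id : LinHomology D →ₗ[Polynomial (ZMod 2)] LinHomology D))

noncomputable instance (M : Type*) [AddCommGroup M] [Module (ZMod 2) M]
    (D : PolynomialModule (ZMod 2) M →ₗ[Polynomial (ZMod 2)] PolynomialModule (ZMod 2) M) :
    AddCommGroup (HModOneAddX M D) :=
  inferInstanceAs (AddCommGroup (LinHomology D ⧸ LinearMap.range
    ((1 + Polynomial.X : Polynomial (ZMod 2)) •
      (LinearMap.id : LinHomology D →ₗ[Polynomial (ZMod 2)] LinHomology D))))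

noncomputable instance (M : Type*) [AddCommGroup M] [Module (ZMod 2) M]
    (D : PolynomialModule (ZMod 2) M →ₗ[Polynomial (ZMod 2)] PolynomialModule (ZMod 2) M) :
    Module (ZMod 2) (HModOneAddX M D) :=
  inferInstanceAs (Module (ZMod 2) (LinHomology D ⧸ LinearMap.range
    ((1 + Polynomial.X : Polynomial (ZMod 2)) •
      (LinearMap.id : LinHomology D →ₗ[Polynomial (ZMod 2)] LinHomology D))))

section Aux

variable {M : Type*} [AddCommGroup M] [Module (ZMod 2) M]

lemma eval_one_single_zero (m : M) :
    PolynomialModule.eval (1 : ZMod 2) (PolynomialModule.single (ZMod 2) 0 m) = m := by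
  rw [PolynomialModule.eval_single]; simp

lemma eval_one_y_smul (p : PolynomialModule (ZMod 2) M) :
    PolynomialModule.eval (1 : ZMod 2) ((1 + Polynomial.X : Polynomial (ZMod 2)) • p) = 0 := by
  rw [PolynomialModule.eval_smul]
  have : ((1 + Polynomial.X : Polynomial (ZMod 2)).eval 1) = 0 := by simp; decide
  rw [this, zero_smul]

lemma y_smul_eq_zero {q : PolynomialModule (ZMod 2) M}
    (h : (1 + Polynomial.X : Polynomial (ZMod 2)) • q = 0) : q = 0 := by
  have hc : ∀ n, q.coeff n + (if 1 ≤ n then (1 : ZMod 2) • q.coeff (n - 1) else 0) = 0 := by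
    intro n
    have h0 := congrArg (fun z : PolynomialModule (ZMod 2) M => z.coeff n) h
    simp only [PolynomialModule.coeff_zero, Finsupp.coe_zero, Pi.zero_apply] at h0
    rw [add_smul, one_smul, PolynomialModule.coeff_add, Finsupp.add_apply,
      ← Polynomial.monomial_one_one_eq_X, PolynomialModule.monomial_smul_apply] at h0
    exact h0
  have key : ∀ n, q.coeff n = 0 := by
    intro n
    induction n with
    | zero => simpa using hc 0
    | succ n ih =>
      have := hc (n + 1)
      simpa [ih] using this
  exact PolynomialModule.ext (Finsupp.ext key)

lemma exists_decomp (p : PolynomialModule (ZMod 2) M) :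
    ∃ q, p = PolynomialModule.single (ZMod 2) 0 (PolynomialModule.eval (1 : ZMod 2) p) +
      (1 + Polynomial.X : Polynomial (ZMod 2)) • q := by
  induction p using PolynomialModule.induction_linear with
  | zero => exact ⟨0, by simp⟩
  | add f g hf hg =>
    obtain ⟨qf, hqf⟩ := hf
    obtain ⟨qg, hqg⟩ := hg
    refine ⟨qf + qg, ?_⟩
    conv_lhs => rw [hqf, hqg]
    simp only [map_add, smul_add, PolynomialModule.single_add]
    abel
  | single a b =>
    refine ⟨(∑ i ∈ Finset.range a, (Polynomial.X : Polynomial (ZMod 2)) ^ i) •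
      PolynomialModule.single (ZMod 2) 0 b, ?_⟩
    rw [PolynomialModule.eval_single, one_pow, one_smul, smul_smul]
    have hmul : (1 + Polynomial.X : Polynomial (ZMod 2)) *
        (∑ i ∈ Finset.range a, (Polynomial.X : Polynomial (ZMod 2)) ^ i) =
        (Polynomial.X : Polynomial (ZMod 2)) ^ a - 1 := by
      have h2 : (1 + Polynomial.X : Polynomial (ZMod 2)) = Polynomial.X - 1 := by
        rw [CharTwo.sub_eq_add, add_comm]
      rw [mul_comm, h2]
      exact geom_sum_mul _ a
    rw [hmul, sub_smul, one_smul, Polynomial.X_pow_eq_monomial,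
      PolynomialModule.monomial_smul_single]
    simp

lemma dTilde_apply (D : PolynomialModule (ZMod 2) M →ₗ[Polynomial (ZMod 2)]
    PolynomialModule (ZMod 2) M) (m : M) :
    dTilde M D m =
      PolynomialModule.eval (1 : ZMod 2) (D (PolynomialModule.single (ZMod 2) 0 m)) := rfl

lemma eval_one_D_eq (D : PolynomialModule (ZMod 2) M →ₗ[Polynomial (ZMod 2)]
    PolynomialModule (ZMod 2) M) (u : PolynomialModule (ZMod 2) M) :
    PolynomialModule.eval (1 : ZMod 2) (D u) =
      dTilde M D (PolynomialModule.eval (1 : ZMod 2) u) := by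
  obtain ⟨r, hr⟩ := exists_decomp u
  rw [dTilde_apply]
  conv_lhs => rw [hr]
  rw [map_add, D.map_smul, map_add, eval_one_y_smul, add_zero]

end Aux

set_option maxHeartbeats 1000000 in
/-- Over `ZMod 2`, if multiplication by `1 + X` is injective on the
homology `H(D) = ker D ⧸ im D`, then `ker d̃ ⧸ im d̃` is `ZMod 2`-linearly isomorphic to
`H(D) ⧸ (1 + X)·H(D)`. -/
theorem homology_dTilde_iso (M : Type*) [AddCommGroup M] [Module (ZMod 2) M]
    (D : PolynomialModule (ZMod 2) M →ₗ[Polynomial (ZMod 2)] PolynomialModule (ZMod 2) M)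
    (hD : D ∘ₗ D = 0)
    (hinj : Function.Injective
      (fun h : LinHomology D => (1 + Polynomial.X : Polynomial (ZMod 2)) • h)) :
    Nonempty (LinHomology (dTilde M D) ≃ₗ[ZMod 2] HModOneAddX M D) := by
  classical
  have hDD : ∀ p, D (D p) = 0 := fun p => by
    have := DFunLike.congr_fun hD p
    simpa using this
  -- the submodules involved
  let N : Submodule (Polynomial (ZMod 2)) ↥(LinearMap.ker D) :=
    (LinearMap.range D).comap (LinearMap.ker D).subtype
  let S : Submodule (Polynomial (ZMod 2)) (LinHomology D) :=
    LinearMap.range ((1 + Polynomial.X : Polynomial (ZMod 2)) •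
      (LinearMap.id : LinHomology D →ₗ[Polynomial (ZMod 2)] LinHomology D))
  let P : Submodule (ZMod 2) ↥(LinearMap.ker (dTilde M D)) :=
    (LinearMap.range (dTilde M D)).comap (LinearMap.ker (dTilde M D)).subtype
  -- the projection `ker D → H(D)/(1+X)H(D)`
  let Pi : ↥(LinearMap.ker D) →ₗ[ZMod 2] HModOneAddX M D :=
    { toFun := fun c => S.mkQ (N.mkQ c)
      map_add' := fun a b => by simp only [map_add]; exact map_add S.mkQ (N.mkQ a) (N.mkQ b)
      map_smul' := fun r c => by
        simp only [RingHom.id_apply]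
        fin_cases r
        · show S.mkQ (N.mkQ ((0 : ZMod 2) • c)) = (0 : ZMod 2) • S.mkQ (N.mkQ c)
          rw [zero_smul, zero_smul, map_zero]; exact map_zero S.mkQ
        · show S.mkQ (N.mkQ ((1 : ZMod 2) • c)) = (1 : ZMod 2) • S.mkQ (N.mkQ c)
          rw [one_smul, one_smul] }
  -- the evaluation map `ker D → ker d̃` and the induced `ψ : ker D → H(d̃)`
  let ev0 : ↥(LinearMap.ker D) →ₗ[ZMod 2] M :=
    (PolynomialModule.eval (1 : ZMod 2)) ∘ₗ
      ((LinearMap.ker D).restrictScalars (ZMod 2)).subtype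
  have hmem : ∀ c : ↥(LinearMap.ker D), ev0 c ∈ LinearMap.ker (dTilde M D) := by
    intro c
    rw [LinearMap.mem_ker]
    show dTilde M D (PolynomialModule.eval (1 : ZMod 2) (c : PolynomialModule (ZMod 2) M)) = 0
    rw [← eval_one_D_eq, show D (c : PolynomialModule (ZMod 2) M) = 0 from c.2, map_zero]
  let ev : ↥(LinearMap.ker D) →ₗ[ZMod 2] ↥(LinearMap.ker (dTilde M D)) :=
    LinearMap.codRestrict (LinearMap.ker (dTilde M D)) ev0 hmem
  let ψ : ↥(LinearMap.ker D) →ₗ[ZMod 2] LinHomology (dTilde M D) := P.mkQ ∘ₗ ev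
  -- surjectivity of Pi
  have hPi : Function.Surjective Pi := by
    intro x
    obtain ⟨y, hy⟩ := Submodule.mkQ_surjective S x
    obtain ⟨z, hz⟩ := Submodule.mkQ_surjective N y
    refine ⟨z, ?_⟩
    show S.mkQ (N.mkQ z) = x
    rw [hz, hy]
  -- surjectivity of ψ
  have hψ : Function.Surjective ψ := by
    intro x
    obtain ⟨mh, rfl⟩ := Submodule.mkQ_surjective P x
    obtain ⟨m, hm⟩ := mh
    have hm' : PolynomialModule.eval (1 : ZMod 2)
        (D (PolynomialModule.single (ZMod 2) 0 m)) = 0 := by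
      rw [← dTilde_apply]; exact hm
    obtain ⟨q, hq⟩ := exists_decomp (D (PolynomialModule.single (ZMod 2) 0 m))
    rw [hm', PolynomialModule.single_zero, zero_add] at hq
    have hDq : D q = 0 := by
      apply y_smul_eq_zero
      rw [← D.map_smul, ← hq]
      exact hDD _
    have hqker : q ∈ LinearMap.ker D := hDq
    have hclass : (Submodule.Quotient.mk (⟨q, hqker⟩ : ↥(LinearMap.ker D)) :
        ↥(LinearMap.ker D) ⧸ N) = 0 := by
      apply hinj
      show (1 + Polynomial.X : Polynomial (ZMod 2)) • _ =
        (1 + Polynomial.X : Polynomial (ZMod 2)) • (0 : LinHomology D)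
      rw [smul_zero]
      refine (Submodule.Quotient.mk_eq_zero N (x := (1 + Polynomial.X : Polynomial (ZMod 2)) •
        (⟨q, hqker⟩ : ↥(LinearMap.ker D)))).mpr ?_
      refine Submodule.mem_comap.mpr (LinearMap.mem_range.mpr
        ⟨PolynomialModule.single (ZMod 2) 0 m, ?_⟩)
      rw [hq, Submodule.subtype_apply, SetLike.val_smul]
    have hqN : (⟨q, hqker⟩ : ↥(LinearMap.ker D)) ∈ N :=
      (Submodule.Quotient.mk_eq_zero N).mp hclass
    obtain ⟨v, hv⟩ := LinearMap.mem_range.mp (Submodule.mem_comap.mp hqN)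
    set c : PolynomialModule (ZMod 2) M :=
      PolynomialModule.single (ZMod 2) 0 m - (1 + Polynomial.X : Polynomial (ZMod 2)) • v with hcdef
    have hc : D c = 0 := by
      rw [hcdef, map_sub, D.map_smul, show D v = q from hv, hq, sub_self]
    refine ⟨⟨c, hc⟩, ?_⟩
    have hevc : ev ⟨c, hc⟩ = ⟨m, hm⟩ := by
      apply Subtype.ext
      show PolynomialModule.eval (1 : ZMod 2) c = m
      rw [hcdef, map_sub, eval_one_single_zero, eval_one_y_smul, sub_zero]
    show P.mkQ (ev ⟨c, hc⟩) = P.mkQ ⟨m, hm⟩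
    rw [hevc]
  -- the kernels coincide
  have hkerEq : LinearMap.ker ψ = LinearMap.ker Pi := by
    ext c
    simp only [LinearMap.mem_ker]
    constructor
    · intro h
      have h1 : ev c ∈ P := (Submodule.Quotient.mk_eq_zero P).mp h
      obtain ⟨m', hm'⟩ := LinearMap.mem_range.mp (Submodule.mem_comap.mp h1)
      have hm'' : dTilde M D m' =
          PolynomialModule.eval (1 : ZMod 2) (c : PolynomialModule (ZMod 2) M) := hm'
      have hev : PolynomialModule.eval (1 : ZMod 2)
          ((c : PolynomialModule (ZMod 2) M) -
            D (PolynomialModule.single (ZMod 2) 0 m')) = 0 := by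
        rw [map_sub, ← dTilde_apply, hm'', sub_self]
      obtain ⟨w, hw⟩ := exists_decomp ((c : PolynomialModule (ZMod 2) M) -
        D (PolynomialModule.single (ZMod 2) 0 m'))
      rw [hev, PolynomialModule.single_zero, zero_add] at hw
      have hDw : D w = 0 := by
        apply y_smul_eq_zero
        rw [← D.map_smul, ← hw, map_sub, hDD,
          show D (c : PolynomialModule (ZMod 2) M) = 0 from c.2, sub_zero]
      show S.mkQ (N.mkQ c) = 0
      refine (Submodule.Quotient.mk_eq_zero S (x := (N.mkQ c : LinHomology D))).mpr ?_
      refine (LinearMap.mem_range (f := (1 + Polynomial.X : Polynomial (ZMod 2)) •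
        (LinearMap.id : LinHomology D →ₗ[Polynomial (ZMod 2)] LinHomology D))).mpr ⟨N.mkQ ⟨w, hDw⟩, ?_⟩
      show (1 + Polynomial.X : Polynomial (ZMod 2)) •
        (Submodule.Quotient.mk (⟨w, hDw⟩ : ↥(LinearMap.ker D)) :
          ↥(LinearMap.ker D) ⧸ N) = Submodule.Quotient.mk c
      rw [← Submodule.Quotient.mk_smul, Submodule.Quotient.eq]
      refine Submodule.mem_comap.mpr (LinearMap.mem_range.mpr
        ⟨- PolynomialModule.single (ZMod 2) 0 m', ?_⟩)
      rw [map_neg, Submodule.subtype_apply, AddSubgroupClass.coe_sub, SetLike.val_smul, ← hw]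
      abel
    · intro h
      have h1 : N.mkQ c ∈ S := (Submodule.Quotient.mk_eq_zero S).mp h
      obtain ⟨z, hz⟩ := (LinearMap.mem_range (f := (1 + Polynomial.X : Polynomial (ZMod 2)) •
        (LinearMap.id : LinHomology D →ₗ[Polynomial (ZMod 2)] LinHomology D))).mp h1
      obtain ⟨w, rfl⟩ := Submodule.mkQ_surjective N z
      have hz0 : ((1 + Polynomial.X : Polynomial (ZMod 2)) • (N.mkQ w) : LinHomology D) =
          N.mkQ c := hz
      have hz1 := (N.mkQ).map_smul (1 + Polynomial.X : Polynomial (ZMod 2)) w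
      have hmemN := (Submodule.Quotient.eq N).mp (hz1.trans hz0)
      obtain ⟨u, hu⟩ := LinearMap.mem_range.mp (Submodule.mem_comap.mp hmemN)
      have hu' : D u = (1 + Polynomial.X : Polynomial (ZMod 2)) •
          (w : PolynomialModule (ZMod 2) M) - (c : PolynomialModule (ZMod 2) M) := by
        rw [hu, Submodule.subtype_apply, AddSubgroupClass.coe_sub, SetLike.val_smul]
      have hevc : PolynomialModule.eval (1 : ZMod 2) (c : PolynomialModule (ZMod 2) M) =
          dTilde M D (- PolynomialModule.eval (1 : ZMod 2) u) := by
        have h2 := congrArg (PolynomialModule.eval (1 : ZMod 2)) hu'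
        rw [map_sub, eval_one_y_smul, zero_sub, eval_one_D_eq] at h2
        rw [map_neg, h2, neg_neg]
      show P.mkQ (ev c) = 0
      rw [Submodule.mkQ_apply, Submodule.Quotient.mk_eq_zero]
      exact Submodule.mem_comap.mpr (LinearMap.mem_range.mpr
        ⟨- PolynomialModule.eval (1 : ZMod 2) u, hevc.symm⟩)
  exact ⟨(ψ.quotKerEquivOfSurjective hψ).symm.trans
    ((Submodule.quotEquivOfEq _ _ hkerEq).trans (Pi.quotKerEquivOfSurjective hPi))⟩
end

section
/- Let F be a field and H a finitely generated module over the polynomial ring F[X] on which multiplication by the scalar 1 + X is injective. Then the F-dimension of the quotient H / (1 + X)·H equals the rank of H over F[X], i.e. the dimension over the fraction field F(X) of the localization F(X) ⊗_{F[X]} H. -/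
open Polynomial TensorProduct

section Aux

variable {R : Type*} [CommRing R]

/-- Transport the quotient by the range of scalar multiplication along a linear equivalence. -/
noncomputable def quotSmulEquiv {M N : Type*} [AddCommGroup M] [AddCommGroup N]
    [Module R M] [Module R N] (σ : M ≃ₗ[R] N) (f : R) :
    (M ⧸ LinearMap.range (f • (LinearMap.id : M →ₗ[R] M))) ≃ₗ[R]
      (N ⧸ LinearMap.range (f • (LinearMap.id : N →ₗ[R] N))) :=
  Submodule.Quotient.equiv _ _ σ (by
    ext x
    simp only [Submodule.mem_map, LinearMap.mem_range, LinearMap.smul_apply, LinearMap.id_apply]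
    constructor
    · rintro ⟨_, ⟨m, rfl⟩, rfl⟩
      exact ⟨σ m, (map_smul σ f m).symm⟩
    · rintro ⟨m, rfl⟩
      exact ⟨f • σ.symm m, ⟨σ.symm m, rfl⟩, by rw [map_smul]; exact congrArg (f • ·) (σ.apply_symm_apply m)⟩)

/-- The quotient of a product by a product of submodules. -/
noncomputable def quotProdEquiv {M N : Type*} [AddCommGroup M] [AddCommGroup N] [Module R M]
    [Module R N] (p : Submodule R M) (q : Submodule R N) :
    ((M × N) ⧸ p.prod q) ≃ₗ[R] (M ⧸ p) × (N ⧸ q) :=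
  (Submodule.quotEquivOfEq _ _
    (by rw [LinearMap.ker_prodMap, Submodule.ker_mkQ, Submodule.ker_mkQ])).trans
    ((p.mkQ.prodMap q.mkQ).quotKerEquivOfSurjective (fun z => by
      obtain ⟨a, ha⟩ := p.mkQ_surjective z.1
      obtain ⟨b, hb⟩ := q.mkQ_surjective z.2
      exact ⟨(a, b), Prod.ext ha hb⟩))

/-- A product with a subsingleton factor. -/
noncomputable def prodSubsingletonEquiv {M N : Type*} [AddCommGroup M] [AddCommGroup N]
    [Module R M] [Module R N] [Subsingleton N] : (M × N) ≃ₗ[R] M :=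
  LinearEquiv.ofLinear (LinearMap.fst R M N) (LinearMap.inl R M N)
    (LinearMap.ext fun x => rfl)
    (LinearMap.ext fun z => Prod.ext rfl (Subsingleton.elim _ _))

theorem subsingleton_fractionRing_tensor {R : Type*} [CommRing R] [IsDomain R] {M : Type*}
    [AddCommGroup M] [Module R M] (h : ∀ m : M, ∃ c : R, c ≠ 0 ∧ c • m = 0) :
    Subsingleton (FractionRing R ⊗[R] M) := by
  rw [subsingleton_iff_forall_eq 0]
  intro x
  induction x using TensorProduct.induction_on with
  | zero => rfl
  | add a b ha hb => rw [ha, hb, add_zero]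
  | tmul k m =>
    obtain ⟨c, hc, hcm⟩ := h m
    obtain ⟨u, hu⟩ : IsUnit (algebraMap R (FractionRing R) c) :=
      IsLocalization.map_units (FractionRing R) ⟨c, mem_nonZeroDivisors_of_ne_zero hc⟩
    have h1 : (algebraMap R (FractionRing R) c) ⊗ₜ[R] m = (0 : FractionRing R ⊗[R] M) := by
      calc algebraMap R (FractionRing R) c ⊗ₜ[R] m
          = (c • (1 : FractionRing R)) ⊗ₜ[R] m := by rw [Algebra.algebraMap_eq_smul_one]
        _ = (1 : FractionRing R) ⊗ₜ[R] (c • m) := smul_tmul c 1 m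
        _ = 0 := by rw [hcm, tmul_zero]
    calc k ⊗ₜ[R] m = ((k * ↑u⁻¹) * ↑u) ⊗ₜ[R] m := by
          rw [mul_assoc, Units.inv_mul, mul_one]
      _ = (k * ↑u⁻¹) • ((u : FractionRing R) ⊗ₜ[R] m) := by rw [smul_tmul', smul_eq_mul]
      _ = 0 := by rw [hu, h1, smul_zero]

end Aux

universe u v

set_option maxHeartbeats 1000000 in
theorem finrank_quotient_eq_rank_aux (F : Type u) [Field F] (H : Type v) [AddCommGroup H]
    [Module (Polynomial F) H] [Module F H] [IsScalarTower F (Polynomial F) H]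
    [Module.Finite (Polynomial F) H]
    (hinj : Function.Injective (fun h : H => (1 + Polynomial.X : Polynomial F) • h)) :
    Module.finrank F
        (H ⧸ LinearMap.range
          ((1 + Polynomial.X : Polynomial F) • (LinearMap.id : H →ₗ[Polynomial F] H))) =
      Module.finrank (FractionRing (Polynomial F))
        (FractionRing (Polynomial F) ⊗[Polynomial F] H) := by
  classical
  set R : Type u := Polynomial F with hR
  set f : R := 1 + Polynomial.X with hfdef
  set K := FractionRing R with hK
  -- irreducibility of f
  have hf_eq : f = Polynomial.X - Polynomial.C (-1 : F) := by
    rw [hfdef, map_neg, map_one, sub_neg_eq_add, add_comm]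
  have hirr : Irreducible f := hf_eq ▸ Polynomial.irreducible_X_sub_C (-1 : F)
  have hprime : Prime f := hirr.prime
  -- structure theorem
  haveI : Module.Finite R (ULift.{u} H) :=
    Module.Finite.equiv (ULift.moduleEquiv (R := R) (M := H)).symm
  obtain ⟨n, ι, fι, p, hp, e, ⟨σ'⟩⟩ :=
    Module.equiv_free_prod_directSum (R := R) (M := ULift.{u} H)
  set P : Type u := (Fin n →₀ R) with hP
  set D := DirectSum ι (fun i => R ⧸ (R ∙ p i ^ e i)) with hD
  set σ : H ≃ₗ[R] P × D := (ULift.moduleEquiv (R := R) (M := H)).symm.trans σ' with hσ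
  -- injectivity of f on the product
  have hinjN : Function.Injective (fun z : P × D => f • z) := by
    intro a b hab
    have hab' : f • a = f • b := hab
    have h1 : σ.symm (f • a) = σ.symm (f • b) := by rw [hab']
    rw [map_smul, map_smul] at h1
    have h2 := hinj h1
    have := congrArg σ h2
    simpa using this
  -- injectivity of f on each torsion component
  have hinjQ : ∀ i, Function.Injective
      (fun x : R ⧸ (R ∙ p i ^ e i) => f • x) := by
    intro i x y hxy
    set ιi : (R ⧸ (R ∙ p i ^ e i)) →ₗ[R] P × D :=
      (LinearMap.inr R P D).comp (DirectSum.lof R ι (fun j => R ⧸ (R ∙ p j ^ e j)) i) with hιi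
    have hιi_inj : Function.Injective ιi := by
      intro a b hab
      have h2 : DirectSum.lof R ι (fun j => R ⧸ (R ∙ p j ^ e j)) i a =
          DirectSum.lof R ι (fun j => R ⧸ (R ∙ p j ^ e j)) i b := congrArg Prod.snd hab
      have h3 : DirectSum.of (fun j => R ⧸ (R ∙ p j ^ e j)) i a =
          DirectSum.of (fun j => R ⧸ (R ∙ p j ^ e j)) i b := h2
      exact DirectSum.of_injective i h3
    have hxy' : f • x = f • y := hxy
    apply hιi_inj
    apply hinjN
    show f • ιi x = f • ιi y
    rw [← map_smul, ← map_smul, hxy']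
  -- f is coprime to each p i ^ e i
  have hcop : ∀ i, IsCoprime f (p i ^ e i) := by
    intro i
    rw [hirr.coprime_iff_not_dvd]
    intro hdvd
    have hei : e i ≠ 0 := by
      rintro h0
      rw [h0, pow_zero] at hdvd
      exact hirr.not_isUnit (isUnit_of_dvd_one hdvd)
    have hdvd_p : f ∣ p i := hprime.dvd_of_dvd_pow hdvd
    obtain ⟨w, hw⟩ : Associated f (p i) := hirr.associated_of_dvd (hp i) hdvd_p
    -- the class of p i ^ (e i - 1) is nonzero f-torsion
    set z : R ⧸ (R ∙ p i ^ e i) := Submodule.Quotient.mk (p i ^ (e i - 1)) with hz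
    have hz0 : f • z = 0 := by
      rw [hz, ← Submodule.Quotient.mk_smul, Submodule.Quotient.mk_eq_zero]
      rw [Submodule.mem_span_singleton]
      refine ⟨(↑w⁻¹ : R), ?_⟩
      have hpow : p i ^ e i = p i * p i ^ (e i - 1) := by
        rw [← pow_succ']
        congr 1
        omega
      have hwi := w.inv_mul
      rw [smul_eq_mul, smul_eq_mul]
      linear_combination (↑w⁻¹ : R) * hpow + (-(↑w⁻¹ : R) * p i ^ (e i - 1)) * hw +
        (f * p i ^ (e i - 1)) * hwi
    have hzne : z ≠ 0 := by
      rw [hz, Ne, Submodule.Quotient.mk_eq_zero, Submodule.mem_span_singleton]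
      rintro ⟨a, ha⟩
      rw [smul_eq_mul] at ha
      have hpne : p i ^ (e i - 1) ≠ 0 := pow_ne_zero _ (hp i).ne_zero
      have : p i ^ (e i - 1) * (a * p i) = p i ^ (e i - 1) * 1 := by
        rw [mul_one]
        calc p i ^ (e i - 1) * (a * p i) = a * (p i * p i ^ (e i - 1)) := by ring
          _ = a * p i ^ e i := by
              rw [← pow_succ']
              congr 2
              omega
          _ = p i ^ (e i - 1) := ha
      have h4 := mul_left_cancel₀ hpne this
      exact (hp i).not_isUnit (IsUnit.of_mul_eq_one a (by rw [mul_comm]; exact h4))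
    apply hzne
    apply hinjQ i
    show f • z = f • 0
    rw [hz0, smul_zero]
  -- f acts surjectively on each torsion component, hence on D
  have hsurjQ : ∀ i, Function.Surjective
      (fun x : R ⧸ (R ∙ p i ^ e i) => f • x) := by
    intro i y
    obtain ⟨a, b, hab⟩ := hcop i
    obtain ⟨r, rfl⟩ := Submodule.Quotient.mk_surjective _ y
    refine ⟨Submodule.Quotient.mk (a * r), ?_⟩
    show f • (Submodule.Quotient.mk (a * r) : R ⧸ (R ∙ p i ^ e i)) = _
    rw [← Submodule.Quotient.mk_smul, Submodule.Quotient.eq, Submodule.mem_span_singleton]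
    exact ⟨-(b * r), by rw [smul_eq_mul, smul_eq_mul]; linear_combination (-r) * hab⟩
  have hsurjD : Function.Surjective (fun d : D => f • d) := by
    intro d
    induction d using DirectSum.induction_on with
    | zero => exact ⟨0, smul_zero f⟩
    | of i x =>
      obtain ⟨y, hy⟩ := hsurjQ i x
      have hy' : f • y = x := hy
      refine ⟨DirectSum.lof R ι (fun j => R ⧸ (R ∙ p j ^ e j)) i y, ?_⟩
      show f • DirectSum.lof R ι (fun j => R ⧸ (R ∙ p j ^ e j)) i y = _
      rw [← map_smul, hy']
      exact DirectSum.lof_eq_of R ι (fun j => R ⧸ (R ∙ p j ^ e j)) i x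
    | add a b ha hb =>
      obtain ⟨x, hx⟩ := ha
      obtain ⟨y, hy⟩ := hb
      have hx' : f • x = a := hx
      have hy' : f • y = b := hy
      exact ⟨x + y, by show f • (x + y) = a + b; rw [smul_add, hx', hy']⟩
  -- D is torsion
  have htorD : ∀ d : D, ∃ c : R, c ≠ 0 ∧ c • d = 0 := by
    intro d
    induction d using DirectSum.induction_on with
    | zero => exact ⟨1, one_ne_zero, smul_zero 1⟩
    | of i x =>
      refine ⟨p i ^ e i, pow_ne_zero _ (hp i).ne_zero, ?_⟩
      obtain ⟨r, rfl⟩ := Submodule.Quotient.mk_surjective _ x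
      have h0 : (p i ^ e i) • (Submodule.Quotient.mk r : R ⧸ (R ∙ p i ^ e i)) = 0 := by
        rw [← Submodule.Quotient.mk_smul, Submodule.Quotient.mk_eq_zero,
          Submodule.mem_span_singleton]
        exact ⟨r, by rw [smul_eq_mul, smul_eq_mul, mul_comm]⟩
      show (p i ^ e i) • DirectSum.of (fun j => R ⧸ (R ∙ p j ^ e j)) i
          (Submodule.Quotient.mk r) = 0
      rw [← DirectSum.lof_eq_of R ι (fun j => R ⧸ (R ∙ p j ^ e j)) i, ← map_smul, h0, map_zero]
    | add a b ha hb =>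
      obtain ⟨c₁, hc₁, hca⟩ := ha
      obtain ⟨c₂, hc₂, hcb⟩ := hb
      refine ⟨c₁ * c₂, mul_ne_zero hc₁ hc₂, ?_⟩
      have h1 : (c₁ * c₂) • a = 0 := by rw [mul_comm, mul_smul, hca, smul_zero]
      have h2 : (c₁ * c₂) • b = 0 := by rw [mul_smul, hcb, smul_zero]
      rw [smul_add, h1, h2, add_zero]
  ------------------------------------------------------------------
  -- LHS : the quotient
  ------------------------------------------------------------------
  have hrangeD : LinearMap.range (f • (LinearMap.id : D →ₗ[R] D)) = ⊤ := by
    rw [LinearMap.range_eq_top]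
    exact hsurjD
  have hsplit : LinearMap.range (f • (LinearMap.id : P × D →ₗ[R] P × D)) =
      (LinearMap.range (f • (LinearMap.id : P →ₗ[R] P))).prod
        (LinearMap.range (f • (LinearMap.id : D →ₗ[R] D))) := by
    ext ⟨x, y⟩
    simp only [LinearMap.mem_range, Submodule.mem_prod, LinearMap.smul_apply,
      LinearMap.id_apply]
    constructor
    · rintro ⟨⟨a, b⟩, h⟩
      exact ⟨⟨a, congrArg Prod.fst h⟩, ⟨b, congrArg Prod.snd h⟩⟩
    · rintro ⟨⟨a, ha⟩, ⟨b, hb⟩⟩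
      exact ⟨(a, b), by rw [Prod.smul_mk, ha, hb]⟩
  letI : ∀ i, AddCommGroup (R ⧸ (R ∙ p i ^ e i)) := fun i => Submodule.Quotient.addCommGroup _
  haveI hsub : Subsingleton (D ⧸ LinearMap.range (f • (LinearMap.id : D →ₗ[R] D))) :=
    Submodule.Quotient.subsingleton_iff.mpr hrangeD
  -- range of f-smul on R is the ideal span of f
  have hrangeR : LinearMap.range (f • (LinearMap.id : R →ₗ[R] R)) =
      (Ideal.span {Polynomial.X - Polynomial.C (-1 : F)} : Ideal R).restrictScalars R := by
    ext x
    simp only [LinearMap.mem_range, LinearMap.smul_apply, LinearMap.id_apply]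
    rw [Submodule.restrictScalars_mem, Ideal.mem_span_singleton, ← hf_eq]
    constructor
    · rintro ⟨y, rfl⟩; exact ⟨y, by rw [smul_eq_mul]⟩
    · rintro ⟨y, rfl⟩; exact ⟨y, by rw [smul_eq_mul]⟩
  have hrangeP : LinearMap.range (f • (LinearMap.id : (Fin n → R) →ₗ[R] Fin n → R)) =
      Submodule.pi Set.univ (fun _ : Fin n => LinearMap.range (f • (LinearMap.id : R →ₗ[R] R))) := by
    ext x
    simp only [LinearMap.mem_range, LinearMap.smul_apply, LinearMap.id_apply, Submodule.mem_pi,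
      Set.mem_univ, forall_true_left]
    constructor
    · rintro ⟨y, rfl⟩ j
      exact ⟨y j, rfl⟩
    · intro hx
      choose y hy using hx
      exact ⟨y, funext fun j => hy j⟩
  -- assemble the chain of R-linear equivalences for the quotient
  let E₁ : (H ⧸ LinearMap.range (f • (LinearMap.id : H →ₗ[R] H))) ≃ₗ[R]
      ((P × D) ⧸ LinearMap.range (f • (LinearMap.id : P × D →ₗ[R] P × D))) :=
    quotSmulEquiv σ f
  let E₂ := Submodule.quotEquivOfEq _ _ hsplit
  let E₃ := quotProdEquiv (LinearMap.range (f • (LinearMap.id : P →ₗ[R] P)))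
      (LinearMap.range (f • (LinearMap.id : D →ₗ[R] D)))
  let E₄ : ((P ⧸ LinearMap.range (f • (LinearMap.id : P →ₗ[R] P))) ×
      (D ⧸ LinearMap.range (f • (LinearMap.id : D →ₗ[R] D)))) ≃ₗ[R]
      (P ⧸ LinearMap.range (f • (LinearMap.id : P →ₗ[R] P))) := prodSubsingletonEquiv
  let E₅ : (P ⧸ LinearMap.range (f • (LinearMap.id : P →ₗ[R] P))) ≃ₗ[R]
      ((Fin n → R) ⧸ LinearMap.range (f • (LinearMap.id : (Fin n → R) →ₗ[R] Fin n → R))) :=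
    quotSmulEquiv (Finsupp.linearEquivFunOnFinite R R (Fin n)) f
  let E₆ := Submodule.quotEquivOfEq _ _ hrangeP
  let E₇ := Submodule.quotientPi
      (fun _ : Fin n => LinearMap.range (f • (LinearMap.id : R →ₗ[R] R)))
  let E₈ : (∀ _ : Fin n, R ⧸ LinearMap.range (f • (LinearMap.id : R →ₗ[R] R))) ≃ₗ[R]
      (∀ _ : Fin n, R ⧸ (Ideal.span {Polynomial.X - Polynomial.C (-1 : F)} : Ideal R)) :=
    LinearEquiv.piCongrRight fun _ => Submodule.quotEquivOfEq _ _ hrangeR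
  let E : (H ⧸ LinearMap.range (f • (LinearMap.id : H →ₗ[R] H))) ≃ₗ[R]
      (∀ _ : Fin n, R ⧸ (Ideal.span {Polynomial.X - Polynomial.C (-1 : F)} : Ideal R)) :=
    E₁ ≪≫ₗ E₂ ≪≫ₗ E₃ ≪≫ₗ E₄ ≪≫ₗ E₅ ≪≫ₗ E₆ ≪≫ₗ E₇ ≪≫ₗ E₈
  let E' : (H ⧸ LinearMap.range (f • (LinearMap.id : H →ₗ[R] H))) ≃ₗ[F] (Fin n → F) :=
    (E.restrictScalars F) ≪≫ₗ
      (LinearEquiv.piCongrRight fun _ =>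
        (Polynomial.quotientSpanXSubCAlgEquiv (-1 : F)).toLinearEquiv)
  have hLHS : Module.finrank F
      (H ⧸ LinearMap.range (f • (LinearMap.id : H →ₗ[R] H))) = n := by
    rw [E'.finrank_eq, Module.finrank_fin_fun]
  ------------------------------------------------------------------
  -- RHS : the rank
  ------------------------------------------------------------------
  haveI : Subsingleton (K ⊗[R] D) := subsingleton_fractionRing_tensor htorD
  let G₁ : K ⊗[R] H ≃ₗ[K] K ⊗[R] (P × D) := LinearEquiv.baseChange R K H (P × D) σ
  let G₂ : K ⊗[R] (P × D) ≃ₗ[K] K ⊗[R] P := by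
    refine LinearEquiv.ofLinear ((LinearMap.fst R P D).baseChange K)
      ((LinearMap.inl R P D).baseChange K) ?_ ?_
    · rw [← LinearMap.baseChange_comp]
      have : (LinearMap.fst R P D).comp (LinearMap.inl R P D) = LinearMap.id := by
        ext x; rfl
      rw [this, LinearMap.baseChange_id]
    · apply LinearMap.ext
      intro x
      induction x using TensorProduct.induction_on with
      | zero => simp
      | add a b ha hb =>
        simp only [LinearMap.coe_comp, Function.comp_apply, map_add, LinearMap.id_coe,
          id_eq] at ha hb ⊢
        rw [ha, hb]
      | tmul k z =>
        obtain ⟨a, b⟩ := z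
        simp only [LinearMap.coe_comp, Function.comp_apply, LinearMap.baseChange_tmul,
          LinearMap.fst_apply, LinearMap.inl_apply, LinearMap.id_coe, id_eq]
        have hb0 : (k ⊗ₜ[R] b : K ⊗[R] D) = 0 := Subsingleton.elim _ _
        have : (k ⊗ₜ[R] ((0 : P), b) : K ⊗[R] (P × D)) =
            (LinearMap.inr R P D).baseChange K (k ⊗ₜ[R] b) := rfl
        calc (k ⊗ₜ[R] ((a, (0 : D))) : K ⊗[R] (P × D))
            = k ⊗ₜ[R] (a, (0 : D)) + k ⊗ₜ[R] ((0 : P), b) := by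
              rw [this, hb0, map_zero, add_zero]
          _ = k ⊗ₜ[R] (a, b) := by rw [← TensorProduct.tmul_add, Prod.mk_add_mk, add_zero, zero_add]
  have h1 : Module.finrank K (K ⊗[R] H) = Module.finrank K (K ⊗[R] P) :=
    LinearEquiv.finrank_eq (G₁ ≪≫ₗ G₂)
  have h2 : Module.finrank K (K ⊗[R] P) = Module.finrank R P := Module.finrank_baseChange
  have h3 : Module.finrank R P = n := by
    show Module.finrank R (Fin n →₀ R) = n
    rw [Module.finrank_finsupp_self, Fintype.card_fin]
  have hRHS : Module.finrank K (K ⊗[R] H) = n := by rw [h1, h2, h3]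
  exact hLHS.trans hRHS.symm

/-- Let `F` be a field and `H` a finitely generated `F[X]`-module on
which multiplication by `1 + X` is injective. Then
`dim_F (H ⧸ (1 + X)·H) = rank_{F[X]} H := dim_{F(X)} (F(X) ⊗_{F[X]} H)`. -/
theorem finrank_quotient_eq_rank (F : Type*) [Field F] (H : Type*) [AddCommGroup H]
    [Module (Polynomial F) H] [Module F H] [IsScalarTower F (Polynomial F) H]
    [Module.Finite (Polynomial F) H]
    (hinj : Function.Injective (fun h : H => (1 + Polynomial.X : Polynomial F) • h)) :
    Module.finrank F
        (H ⧸ LinearMap.range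
          ((1 + Polynomial.X : Polynomial F) • (LinearMap.id : H →ₗ[Polynomial F] H))) =
      Module.finrank (FractionRing (Polynomial F))
        (FractionRing (Polynomial F) ⊗[Polynomial F] H) :=
  finrank_quotient_eq_rank_aux F H hinj
end
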